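/- Let t₁, t₂, …, tₙ be real numbers, congruent to one another modulo ℤ, with t₂ > t₃ > … > tₙ > 0, and let t⁻ := (t₁, …, tₙ, −tₙ, …, −t₁) be the sequence of length 2n. Apply the Robinson–Schensted row insertion algorithm to t⁻ and let P(t⁻) be the resulting tableau. If −tₙ < t₁ ≤ t₂, then P(t⁻) has shape [2, 2, 1^{2n−4}] (two columns, of lengths 2n−2 and 2). If t₁ ≤ −tₙ, then P(t⁻) has shape [3, 1^{2n−3}] (three columns, of lengths 2n−2, 1 and 1). -/

import Mathlib

set_option linter.unusedSectionVars false


/-! ## The Robinson–Schensted insertion algorithm -/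

section RS

variable {α : Type*} [LinearOrder α]

/-- Robinson–Schensted row insertion: insert `x` into a (weakly increasing) row,
bumping the first entry which is strictly greater than `x`. -/
def rowInsert : List α → α → List α × Option α
  | [], x => ([x], none)
  | y :: ys, x =>
    if x < y then (x :: ys, some y)
    else
      let p := rowInsert ys x
      (y :: p.1, p.2)

/-- Insert an entry into a tableau (recorded as its list of rows), bumping rows downwards. -/
def tableauInsert : List (List α) → α → List (List α)
  | [], x => [[x]]
  | r :: rs, x =>
    match rowInsert r x with
    | (r', none) => r' :: rs
    | (r', some y) => r' :: tableauInsert rs y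

/-- The Robinson–Schensted insertion tableau `P(w)` of a word `w`. -/
def RS (w : List α) : List (List α) := w.foldl tableauInsert []

/-- The shape `𝐩(w)` of the Robinson–Schensted tableau `P(w)`: its list of row lengths. -/
def RSshape (w : List α) : List ℕ := (RS w).map List.length

/-- The length of the `j`-th column (`j = 1, 2, …`) of the tableau `P(w)`. -/
def RScol (w : List α) (j : ℕ) : ℕ := ((RS w).filter fun r => j ≤ r.length).length

lemma getLastD_eq_getLast' (l : List α) (x : α) (h : l ≠ []) :
    l.getLastD x = l.getLast h := by
  rw [List.getLastD_eq_getLast?, List.getLast?_eq_getLast h]; rfl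

lemma getLastD_mem_cons' (l : List α) (x : α) : l.getLastD x ∈ x :: l := by
  cases l with
  | nil => simp
  | cons a l =>
    have := List.getLast_mem (show a :: l ≠ [] by simp)
    rw [getLastD_eq_getLast' (a :: l) x (by simp)]
    exact List.mem_cons_of_mem x this

lemma getLast_cons_eq_getLastD (a : α) (l : List α) (h : a :: l ≠ []) :
    (a :: l).getLast h = l.getLastD a := by
  rw [← getLastD_eq_getLast' (a :: l) a h, List.getLastD_cons]

lemma pairwise_dropLast_gt (l : List α) (h : l ≠ []) (hp : l.Pairwise (· > ·)) :
    ∀ u ∈ l.dropLast, l.getLast h < u := by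
  intro u h1
  conv at hp => rw [← List.dropLast_append_getLast h]
  exact (List.pairwise_append.1 hp).2.2 u h1 _ (by simp)

lemma pairwise_getLast_le (l : List α) (h : l ≠ []) (hp : l.Pairwise (· > ·)) :
    ∀ u ∈ l, l.getLast h ≤ u := by
  intro u hu
  conv at hu => rw [← List.dropLast_append_getLast h]
  rcases List.mem_append.1 hu with h1 | h1
  · exact le_of_lt (pairwise_dropLast_gt l h hp u h1)
  · simp only [List.mem_singleton] at h1; exact le_of_eq h1.symm

lemma dropWhile_lt (x : α) : ∀ l : List α, l.Pairwise (· > ·) →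
    ∀ b ∈ l.dropWhile (fun z => x ≤ z), b < x := by
  intro l
  induction l with
  | nil => simp
  | cons a l ih =>
    intro hp b hb
    by_cases h : x ≤ a
    · rw [List.dropWhile_cons_of_pos (by simpa using h)] at hb
      exact ih hp.of_cons b hb
    · rw [List.dropWhile_cons_of_neg (by simpa using h)] at hb
      push_neg at h
      rcases List.mem_cons.1 hb with rfl | hb
      · exact h
      · exact lt_trans ((List.pairwise_cons.1 hp).1 b hb) h

lemma map_singleton_length (l : List α) :
    (l.map fun a => [a]).map List.length = List.replicate l.length 1 := by
  induction l with
  | nil => rfl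
  | cons a l ih => simp [ih, List.replicate_succ]

lemma col_insert : ∀ (c : List α) (v : α), c.Pairwise (· < ·) → (∀ u ∈ c, v < u) →
    tableauInsert (c.map fun a => [a]) v = (v :: c).map fun a => [a] := by
  intro c
  induction c with
  | nil => intro v _ _; rfl
  | cons x xs ih =>
    intro v hp hv
    have hx : v < x := hv x (by simp)
    have : rowInsert [x] v = ([v], some x) := by simp [rowInsert, if_pos hx]
    simp only [List.map_cons, tableauInsert, this]
    rw [ih x (hp.of_cons) (fun u hu => (List.pairwise_cons.1 hp).1 u hu)]; rfl

lemma row2_insert_lt {x y z : α} (h : z < x) :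
    rowInsert [x, y] z = ([z, y], some x) := by
  simp [rowInsert, if_pos h]

lemma row2_insert_mid {x y z : α} (h1 : ¬ z < x) (h2 : z < y) :
    rowInsert [x, y] z = ([x, z], some y) := by
  simp [rowInsert, if_neg h1, if_pos h2]

lemma row2_insert_ge {x y z : α} (h1 : ¬ z < x) (h2 : ¬ z < y) :
    rowInsert [x, y] z = ([x, y, z], none) := by
  simp [rowInsert, if_neg h1, if_neg h2]

lemma regime1 : ∀ (D : List α) (x y : α) (c : List α), D.Pairwise (· > ·) →
    (∀ z ∈ D, x ≤ z ∧ z < y) → c.Pairwise (· < ·) → (∀ u ∈ c, y < u) →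
    List.foldl tableauInsert ([x, y] :: c.map fun a => [a]) D =
      [x, D.getLastD y] :: ((y :: D).dropLast.reverse ++ c).map fun a => [a] := by
  intro D
  induction D with
  | nil => intro x y c _ _ _ _; simp
  | cons z D' ih =>
    intro x y c hp hz hc hyc
    have h1 : ¬ z < x := not_lt.2 (hz z (by simp)).1
    have h2 : z < y := (hz z (by simp)).2
    simp only [List.foldl_cons]
    have hstep : tableauInsert ([x, y] :: c.map fun a => [a]) z =
        [x, z] :: ((y :: c).map fun a => [a]) := by
      simp only [tableauInsert, row2_insert_mid h1 h2]
      rw [col_insert c y hc hyc]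
    rw [hstep, ih x z (y :: c) hp.of_cons
      (fun w hw => ⟨(hz w (by simp [hw])).1, (List.pairwise_cons.1 hp).1 w hw⟩)
      (List.pairwise_cons.2 ⟨hyc, hc⟩)
      (fun u hu => by
        rcases List.mem_cons.1 hu with h | h
        · exact h ▸ h2
        · exact h2.trans (hyc u h))]
    congr 1
    · rw [List.getLastD_cons]
    · have : (y :: z :: D').dropLast = y :: (z :: D').dropLast := rfl
      rw [this]
      simp

lemma regime2 : ∀ (D : List α) (x y : α) (c : List α), D.Pairwise (· > ·) →
    (∀ z ∈ D, z < x) → c.Pairwise (· < ·) → (∀ u ∈ c, x < u) →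
    List.foldl tableauInsert ([x, y] :: c.map fun a => [a]) D =
      [D.getLastD x, y] :: ((x :: D).dropLast.reverse ++ c).map fun a => [a] := by
  intro D
  induction D with
  | nil => intro x y c _ _ _ _; simp
  | cons z D' ih =>
    intro x y c hp hz hc hxc
    have h1 : z < x := hz z (by simp)
    simp only [List.foldl_cons]
    have hstep : tableauInsert ([x, y] :: c.map fun a => [a]) z =
        [z, y] :: ((x :: c).map fun a => [a]) := by
      simp only [tableauInsert, row2_insert_lt h1]
      rw [col_insert c x hc hxc]
    rw [hstep, ih z y (x :: c) hp.of_cons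
      (fun w hw => (List.pairwise_cons.1 hp).1 w hw)
      (List.pairwise_cons.2 ⟨hxc, hc⟩)
      (fun u hu => by
        rcases List.mem_cons.1 hu with h | h
        · exact h ▸ h1
        · exact h1.trans (hxc u h))]
    congr 1
    · rw [List.getLastD_cons]
    · have : (x :: z :: D').dropLast = x :: (z :: D').dropLast := rfl
      rw [this]
      simp

/-- The tableau after inserting `T1, T2` followed by the strictly decreasing run `Dl`. -/
lemma pre_tableau (T1 T2 : α) (Dl : List α)
    (hT12 : T1 ≤ T2) (hDp : Dl.Pairwise (· > ·)) (hDlt : ∀ z ∈ Dl, z < T2) :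
    List.foldl tableauInsert [] (T1 :: T2 :: Dl) =
      [(Dl.dropWhile (fun z => T1 ≤ z)).getLastD T1,
       (Dl.takeWhile (fun z => T1 ≤ z)).getLastD T2] ::
      (((T1 :: Dl.dropWhile (fun z => T1 ≤ z)).dropLast.reverse ++
        (T2 :: Dl.takeWhile (fun z => T1 ≤ z)).dropLast.reverse).map fun a => [a]) := by
  classical
  set A := Dl.takeWhile (fun z => T1 ≤ z) with hA
  set B := Dl.dropWhile (fun z => T1 ≤ z) with hB
  have hAB : A ++ B = Dl := List.takeWhile_append_dropWhile
  have hAsub : A.Sublist Dl := by rw [hA]; exact List.takeWhile_sublist _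
  have hBsub : B.Sublist Dl := by rw [hB]; exact List.dropWhile_sublist _
  have hAmem : ∀ z ∈ A, T1 ≤ z := by
    intro z hz; have := List.mem_takeWhile_imp (hA ▸ hz); simpa using this
  have hBmem : ∀ z ∈ B, z < T1 := by rw [hB]; exact dropWhile_lt T1 Dl hDp
  have hApair : A.Pairwise (· > ·) := hDp.sublist hAsub
  have hBpair : B.Pairwise (· > ·) := hDp.sublist hBsub
  have hAApair : (T2 :: A).Pairwise (· > ·) :=
    List.pairwise_cons.2 ⟨fun z hz => hDlt z (hAsub.subset hz), hApair⟩
  set dk := A.getLastD T2 with hdk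
  have hdkmem : dk ∈ T2 :: A := getLastD_mem_cons' A T2
  have hdkeq : (T2 :: A).getLast (by simp) = dk := getLast_cons_eq_getLastD T2 A (by simp)
  have hT1dk : T1 ≤ dk := by
    rcases List.mem_cons.1 hdkmem with h | h
    · exact h ▸ hT12
    · exact hAmem _ h
  have h0 : List.foldl tableauInsert [] (T1 :: T2 :: Dl) =
      List.foldl tableauInsert [[T1, T2]] Dl := by
    simp only [List.foldl_cons]
    congr 1
    show tableauInsert (tableauInsert [] T1) T2 = [[T1, T2]]
    have : rowInsert [T1] T2 = ([T1, T2], none) := by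
      simp [rowInsert, if_neg (not_lt.2 hT12)]
    simp [tableauInsert, this]
  rw [h0, ← hAB, List.foldl_append]
  have h1 : List.foldl tableauInsert [[T1, T2]] A =
      [T1, dk] :: (((T2 :: A).dropLast.reverse).map fun a => [a]) := by
    have := regime1 A T1 T2 [] hApair
      (fun z hz => ⟨hAmem z hz, hDlt z (hAsub.subset hz)⟩) (by simp) (by simp)
    simp only [List.map_nil, List.append_nil] at this
    exact this
  rw [h1]
  have hc1pair : ((T2 :: A).dropLast.reverse).Pairwise (· < ·) := by
    rw [List.pairwise_reverse]
    exact hAApair.sublist (List.dropLast_sublist _)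
  have hc1gt : ∀ u ∈ (T2 :: A).dropLast.reverse, T1 < u := by
    intro u hu
    have := pairwise_dropLast_gt (T2 :: A) (by simp) hAApair u (List.mem_reverse.1 hu)
    rw [hdkeq] at this
    exact lt_of_le_of_lt hT1dk this
  exact regime2 B T1 dk _ hBpair hBmem hc1pair hc1gt

lemma getLastD_append_of_ne_nil (A B : List α) (hB : B ≠ []) (x y : α) :
    (A ++ B).getLastD x = B.getLastD y := by
  rw [getLastD_eq_getLast' _ x (by simp [hB]), getLastD_eq_getLast' B y hB]
  exact List.getLast_append_right hB

lemma aux_case1 (T1 T2 e : α) (Dl : List α)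
    (hT12 : T1 ≤ T2) (hDp : Dl.Pairwise (· > ·)) (hDlt : ∀ z ∈ Dl, z < T2)
    (hb : ∃ b ∈ Dl, b < T1)
    (hlast : Dl.getLastD e ≤ e)
    (hhi : ∀ z ∈ T2 :: Dl, T1 ≤ z → e < z) :
    RSshape (T1 :: T2 :: (Dl ++ [e])) = 2 :: 2 :: List.replicate (Dl.length - 1) 1 := by
  classical
  set A := Dl.takeWhile (fun z => T1 ≤ z) with hA
  set B := Dl.dropWhile (fun z => T1 ≤ z) with hB
  have hAB : A ++ B = Dl := List.takeWhile_append_dropWhile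
  have hAsub : A.Sublist Dl := by rw [hA]; exact List.takeWhile_sublist _
  have hAmem : ∀ z ∈ A, T1 ≤ z := by
    intro z hz; have := List.mem_takeWhile_imp (hA ▸ hz); simpa using this
  have hBmem : ∀ z ∈ B, z < T1 := by rw [hB]; exact dropWhile_lt T1 Dl hDp
  set dk := A.getLastD T2 with hdk
  have hdkmem : dk ∈ T2 :: A := getLastD_mem_cons' A T2
  have hT1dk : T1 ≤ dk := by
    rcases List.mem_cons.1 hdkmem with h | h
    · exact h ▸ hT12
    · exact hAmem _ h
  set a := B.getLastD T1 with ha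
  -- B is nonempty
  obtain ⟨b, hbD, hbT⟩ := hb
  have hbB : b ∈ B := by
    rcases List.mem_append.1 (hAB ▸ hbD : b ∈ A ++ B) with h | h
    · exact absurd (hAmem b h) (not_le.2 hbT)
    · exact h
  have hBne : B ≠ [] := List.ne_nil_of_mem hbB
  -- a is the last letter of Dl, hence ≤ e
  have hae : a ≤ e := by
    have h1 : Dl.getLastD e = B.getLastD T1 := by
      rw [← hAB]; exact getLastD_append_of_ne_nil A B hBne e T1
    rw [ha, ← h1]; exact hlast
  have hedk : e < dk := by
    refine hhi dk ?_ hT1dk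
    rcases List.mem_cons.1 hdkmem with h | h
    · exact h ▸ List.mem_cons_self
    · exact List.mem_cons_of_mem _ (hAsub.subset h)
  -- split off the head of the column
  set X := (T1 :: B).dropLast.reverse with hX
  have hXlen : X.length = B.length := by simp [hX]
  have hXne : X ≠ [] := by
    intro h; rw [h] at hXlen; simp at hXlen; exact hBne (List.eq_nil_of_length_eq_zero hXlen.symm)
  obtain ⟨c₂, X', hX'⟩ := List.exists_cons_of_ne_nil hXne
  have hc₂T1 : c₂ ≤ T1 := by
    have h1 : c₂ ∈ X := hX' ▸ List.mem_cons_self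
    have h2 : c₂ ∈ T1 :: B :=
      (List.dropLast_sublist _).subset (List.mem_reverse.1 (hX ▸ h1))
    rcases List.mem_cons.1 h2 with h | h
    · exact le_of_eq h
    · exact le_of_lt (hBmem _ h)
  -- the word
  have hword : T1 :: T2 :: (Dl ++ [e]) = (T1 :: T2 :: Dl) ++ [e] := by simp
  unfold RSshape RS
  rw [hword, List.foldl_append, pre_tableau T1 T2 Dl hT12 hDp hDlt]
  rw [show (Dl.dropWhile fun z => T1 ≤ z) = B from rfl,
      show (Dl.takeWhile fun z => T1 ≤ z) = A from rfl]
  rw [← hX, hX', show (c₂ :: X') ++ (T2 :: A).dropLast.reverse =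
      c₂ :: (X' ++ (T2 :: A).dropLast.reverse) from rfl]
  simp only [List.foldl_cons, List.foldl_nil]
  have hstep : tableauInsert
      ([a, dk] :: ((c₂ :: (X' ++ (T2 :: A).dropLast.reverse)).map fun x => [x])) e =
      [a, e] :: [c₂, dk] :: ((X' ++ (T2 :: A).dropLast.reverse).map fun x => [x]) := by
    simp only [tableauInsert, row2_insert_mid (not_lt.2 hae) hedk, List.map_cons]
    have h1 : rowInsert [c₂] dk = ([c₂, dk], none) := by
      simp [rowInsert, if_neg (not_lt.2 (le_trans hc₂T1 hT1dk))]
    simp [tableauInsert, h1]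
  rw [hstep]
  simp only [List.map_cons, List.length_cons, List.length_nil, map_singleton_length]
  have hlen : (X' ++ (T2 :: A).dropLast.reverse).length = Dl.length - 1 := by
    have h1 : A.length + B.length = Dl.length := by
      rw [← hAB, List.length_append]
    have h2 : X.length = X'.length + 1 := by rw [hX']; simp
    have h3 : 1 ≤ B.length := List.length_pos_iff.2 hBne
    simp only [List.length_append, List.length_reverse, List.length_dropLast,
      List.length_cons]
    omega
  rw [hlen]

lemma aux_case2 (T1 T2 e : α) (Dl : List α)
    (hT12 : T1 ≤ T2) (hDp : Dl.Pairwise (· > ·)) (hDlt : ∀ z ∈ Dl, z < T2)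
    (hT1e : T1 ≤ e)
    (hlast : Dl.getLastD e ≤ e)
    (hw : ∃ w ∈ Dl, T1 ≤ w ∧ w ≤ e) :
    RSshape (T1 :: T2 :: (Dl ++ [e])) = 3 :: List.replicate Dl.length 1 := by
  classical
  set A := Dl.takeWhile (fun z => T1 ≤ z) with hA
  set B := Dl.dropWhile (fun z => T1 ≤ z) with hB
  have hAB : A ++ B = Dl := List.takeWhile_append_dropWhile
  have hAmem : ∀ z ∈ A, T1 ≤ z := by
    intro z hz; have := List.mem_takeWhile_imp (hA ▸ hz); simpa using this
  have hBmem : ∀ z ∈ B, z < T1 := by rw [hB]; exact dropWhile_lt T1 Dl hDp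
  have hApair : A.Pairwise (· > ·) := hDp.sublist (by rw [hA]; exact List.takeWhile_sublist _)
  set dk := A.getLastD T2 with hdk
  set a := B.getLastD T1 with ha
  -- a ≤ e
  have hae : a ≤ e := by
    by_cases hBne : B = []
    · rw [ha, hBne]; exact hT1e
    · have h1 : Dl.getLastD e = B.getLastD T1 := by
        rw [← hAB]; exact getLastD_append_of_ne_nil A B hBne e T1
      rw [ha, ← h1]; exact hlast
  -- dk ≤ e
  obtain ⟨w, hwD, hwT1, hwe⟩ := hw
  have hwA : w ∈ A := by
    rcases List.mem_append.1 (hAB ▸ hwD : w ∈ A ++ B) with h | h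
    · exact h
    · exact absurd (hBmem w h) (not_lt.2 hwT1)
  have hAne : A ≠ [] := List.ne_nil_of_mem hwA
  have hdke : dk ≤ e := by
    rw [hdk, getLastD_eq_getLast' A T2 hAne]
    exact le_trans (pairwise_getLast_le A hAne hApair w hwA) hwe
  -- the word
  have hword : T1 :: T2 :: (Dl ++ [e]) = (T1 :: T2 :: Dl) ++ [e] := by simp
  unfold RSshape RS
  rw [hword, List.foldl_append, pre_tableau T1 T2 Dl hT12 hDp hDlt]
  rw [show (Dl.dropWhile fun z => T1 ≤ z) = B from rfl,
      show (Dl.takeWhile fun z => T1 ≤ z) = A from rfl]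
  simp only [List.foldl_cons, List.foldl_nil]
  have hstep : tableauInsert
      ([a, dk] :: (((T1 :: B).dropLast.reverse ++ (T2 :: A).dropLast.reverse).map
        fun x => [x])) e =
      [a, dk, e] :: (((T1 :: B).dropLast.reverse ++ (T2 :: A).dropLast.reverse).map
        fun x => [x]) := by
    simp only [tableauInsert, row2_insert_ge (not_lt.2 hae) (not_lt.2 hdke)]
  rw [hstep]
  simp only [List.map_cons, List.length_cons, List.length_nil, map_singleton_length]
  have hlen : ((T1 :: B).dropLast.reverse ++ (T2 :: A).dropLast.reverse).length
      = Dl.length := by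
    have h1 : A.length + B.length = Dl.length := by
      rw [← hAB, List.length_append]
    simp only [List.length_append, List.length_reverse, List.length_dropLast,
      List.length_cons]
    omega
  rw [hlen]



end RS

/-- For `λ = (t₁, …, tₙ)`, the sequence `λ⁻ = (t₁, …, tₙ, −tₙ, …, −t₁)`. -/
def minusSeq {α : Type*} [Neg α] (w : List α) : List α := w ++ w.reverse.map (fun x => -x)


/-- Let `t₁, …, tₙ` be real numbers, congruent to one another modulo `ℤ`, with
`t₂ > t₃ > ⋯ > tₙ > 0`, and let `t⁻ = (t₁, …, tₙ, −tₙ, …, −t₁)`.  If `−tₙ < t₁ ≤ t₂` then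
the Robinson–Schensted insertion tableau `P(t⁻)` has shape `[2, 2, 1^{2n−4}]`
(two columns, of lengths `2n−2` and `2`); if `t₁ ≤ −tₙ` then `P(t⁻)` has shape
`[3, 1^{2n−3}]` (three columns, of lengths `2n−2`, `1` and `1`). -/
theorem rs_shape_type_B
    (n : ℕ) (hn : 2 ≤ n) (t : Fin n → ℝ)
    (hcong : ∀ i j : Fin n, ∃ m : ℤ, t i - t j = (m : ℝ))
    (hdec : ∀ i j : Fin n, 1 ≤ (i : ℕ) → i < j → t j < t i)
    (hpos : 0 < t ⟨n - 1, by omega⟩) :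
    ((-t ⟨n - 1, by omega⟩ < t ⟨0, by omega⟩ ∧ t ⟨0, by omega⟩ ≤ t ⟨1, by omega⟩) →
      RSshape (minusSeq (List.ofFn t)) = 2 :: 2 :: List.replicate (2 * n - 4) 1) ∧
    (t ⟨0, by omega⟩ ≤ -t ⟨n - 1, by omega⟩ →
      RSshape (minusSeq (List.ofFn t)) = 3 :: List.replicate (2 * n - 3) 1) := by
  obtain ⟨m, rfl⟩ : ∃ m, n = m + 2 := ⟨n - 2, by omega⟩
  have h0 : (0:ℕ) < m + 2 := by omega
  have h1 : (1:ℕ) < m + 2 := by omega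
  have hN : m + 1 < m + 2 := by omega
  have hpos' : (0:ℝ) < t ⟨m + 1, hN⟩ := hpos
  set T1 : ℝ := t ⟨0, h0⟩ with hT1_def
  set T2 : ℝ := t ⟨1, h1⟩ with hT2_def
  set TN : ℝ := t ⟨m + 1, hN⟩ with hTN_def
  set u : List ℝ := List.ofFn (fun i : Fin (m+1) => t i.succ) with hu_def
  set u'' : List ℝ := List.ofFn (fun i : Fin m => t i.succ.succ) with hu''_def
  set v : List ℝ := u.reverse.map (fun x : ℝ => -x) with hv_def
  set Dl : List ℝ := u'' ++ v with hD_def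
  have hofn : List.ofFn t = T1 :: u := by
    rw [hu_def, hT1_def, List.ofFn_succ]
    congr 1
  have hu : u = T2 :: u'' := by
    rw [hu_def, hu''_def, hT2_def, List.ofFn_succ]
    congr 1
  have humem : ∀ z ∈ u, TN ≤ z ∧ z ≤ T2 := by
    intro z hz
    rw [hu_def, List.mem_ofFn] at hz
    obtain ⟨i, rfl⟩ := hz
    have hiv : (i.succ : ℕ) = (i : ℕ) + 1 := Fin.val_succ i
    have hile : (i : ℕ) < m + 1 := i.isLt
    constructor
    · rcases eq_or_lt_of_le (show (i.succ : ℕ) ≤ m + 1 by omega) with h | h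
      · exact le_of_eq (congrArg t (Fin.ext (by rw [h]))).symm
      · exact le_of_lt (hdec i.succ ⟨m + 1, hN⟩ (by omega) (by rw [Fin.lt_def]; exact h))
    · rcases eq_or_lt_of_le (show 1 ≤ (i.succ : ℕ) by omega) with h | h
      · exact le_of_eq (congrArg t (Fin.ext (by rw [← h])))
      · exact le_of_lt (hdec ⟨1, h1⟩ i.succ (by norm_num) (by rw [Fin.lt_def]; exact h))
  have hupair : u.Pairwise (· > ·) := by
    rw [hu_def, List.pairwise_ofFn]
    intro i j hij
    exact hdec i.succ j.succ (by simp) (by rwa [Fin.succ_lt_succ_iff])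
  have hT2u : T2 ∈ u := by rw [hu]; exact List.mem_cons_self
  have hTNu : TN ∈ u := by
    rw [hu_def, List.mem_ofFn]
    exact ⟨⟨m, by omega⟩, congrArg t (Fin.ext (by simp))⟩
  have hTNT2 : TN ≤ T2 := (humem T2 hT2u).1
  have hvmem : ∀ z ∈ v, -T2 ≤ z ∧ z ≤ -TN := by
    intro z hz
    rw [hv_def] at hz
    simp only [List.mem_map, List.mem_reverse] at hz
    obtain ⟨y, hy, rfl⟩ := hz
    obtain ⟨hy1, hy2⟩ := humem y hy
    exact ⟨neg_le_neg hy2, neg_le_neg hy1⟩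
  have hvpair : v.Pairwise (· > ·) := by
    rw [hv_def, List.pairwise_map, List.pairwise_reverse]
    exact hupair.imp (fun h => neg_lt_neg h)
  have hT2v : -T2 ∈ v := by
    rw [hv_def]
    exact List.mem_map.2 ⟨T2, List.mem_reverse.2 hT2u, rfl⟩
  have hTNv : -TN ∈ v := by
    rw [hv_def]
    exact List.mem_map.2 ⟨TN, List.mem_reverse.2 hTNu, rfl⟩
  have hu''sub : u''.Sublist u := by
    rw [hu]; exact List.sublist_cons_self _ _
  have hu2pair : (T2 :: u'').Pairwise (· > ·) := by rw [← hu]; exact hupair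
  have hDpair : Dl.Pairwise (· > ·) := by
    rw [hD_def, List.pairwise_append]
    refine ⟨hupair.sublist hu''sub, hvpair, ?_⟩
    intro a ha b hb
    have h1 := (humem a (hu''sub.subset ha)).1
    have h2 := (hvmem b hb).2
    simp only [gt_iff_lt]
    linarith
  have hDlt : ∀ z ∈ Dl, z < T2 := by
    intro z hz
    rcases List.mem_append.1 (by rw [← hD_def]; exact hz) with h | h
    · exact (List.pairwise_cons.1 hu2pair).1 z h
    · have := (hvmem z h).2; linarith
  have hmemD : ∀ z ∈ Dl, TN ≤ z ∨ z ≤ -TN := by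
    intro z hz
    rcases List.mem_append.1 (by rw [← hD_def]; exact hz) with h | h
    · exact Or.inl (humem z (hu''sub.subset h)).1
    · exact Or.inr (hvmem z h).2
  have hDlast : ∀ y : ℝ, Dl.getLastD y = -T2 := by
    intro y
    have hvne : v ≠ [] := List.ne_nil_of_mem hTNv
    rw [hD_def, getLastD_append_of_ne_nil u'' v hvne y y, hv_def, hu,
        List.reverse_cons, List.map_append]
    rw [getLastD_append_of_ne_nil _ (List.map (fun x : ℝ => -x) [T2]) (by simp) y y]
    simp
  have hDlen : Dl.length = 2 * m + 1 := by
    simp only [hD_def, List.length_append, hu''_def, List.length_ofFn, hv_def,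
      List.length_map, List.length_reverse, hu_def]
    omega
  have hword : minusSeq (List.ofFn t) = T1 :: T2 :: (Dl ++ [-T1]) := by
    unfold minusSeq
    rw [hofn, hD_def, hv_def, hu]
    simp [List.reverse_cons, List.map_append, List.append_assoc]
  constructor
  · rintro ⟨hc1a, hc1b⟩
    have hc1a' : -TN < T1 := hc1a
    have hc1b' : T1 ≤ T2 := hc1b
    have key := aux_case1 T1 T2 (-T1) Dl hc1b' hDpair hDlt
      ⟨-T2, by rw [hD_def]; exact List.mem_append_right _ hT2v, by linarith⟩
      (by rw [hDlast]; linarith)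
      (by
        intro z hz hT1z
        rcases List.mem_cons.1 hz with rfl | hz'
        · linarith
        · rcases hmemD z hz' with h | h
          · linarith
          · linarith)
    rw [hword, key, hDlen]
    congr 1
  · intro hc2
    have hc2' : T1 ≤ -TN := hc2
    have hT12 : T1 ≤ T2 := by linarith
    have key := aux_case2 T1 T2 (-T1) Dl hT12 hDpair hDlt
      (by linarith)
      (by rw [hDlast]; linarith)
      ⟨-TN, by rw [hD_def]; exact List.mem_append_right _ hTNv, hc2', by linarith⟩
    rw [hword, key, hDlen]
    congr 1
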